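/- Every iterate of the Bellman backup of a pointwise minimum of finitely many linear functions is again a pointwise minimum of finitely many linear functions: define the operator H on functions w : (I → ℝ) → ℝ by (H w)(p) = min_{a ∈ A} ( ∑_i (c a) i · p i + β · ∑_{z ∈ Z} w( (M a z)ᵀ.mulVec p ) ). Then for every finite nonempty set Γ of vectors in I → ℝ and every n ∈ ℕ, there exists a finite nonempty set Γ_n of vectors in I → ℝ such that H^[n] (v_Γ) = v_{Γ_n}. -/

import Mathlib

open Matrix

private lemma mono_map_inf' {ι : Type*} {s : Finset ι} (hs : s.Nonempty)
    (g : ι → ℝ) {f : ℝ → ℝ} (hf : Monotone f) :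
    f (s.inf' hs g) = s.inf' hs (fun x => f (g x)) := by
  obtain ⟨x, hx, hxeq⟩ := Finset.exists_mem_eq_inf' hs g
  apply le_antisymm
  · apply Finset.le_inf'
    intro y hy
    exact hf (Finset.inf'_le g hy)
  · rw [hxeq]
    exact Finset.inf'_le _ hx

private lemma sum_inf' {Z ι : Type*} [Fintype Z] [DecidableEq Z] {s : Finset ι} (hs : s.Nonempty)
    (g : Z → ι → ℝ) :
    ∑ z, s.inf' hs (g z)
      = (Fintype.piFinset fun _ : Z => s).inf'
          (Fintype.piFinset_nonempty.2 fun _ => hs) (fun σ => ∑ z, g z (σ z)) := by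
  apply le_antisymm
  · apply Finset.le_inf'
    intro σ hσ
    apply Finset.sum_le_sum
    intro z _
    exact Finset.inf'_le _ (Fintype.mem_piFinset.mp hσ z)
  · have h := fun z => Finset.exists_mem_eq_inf' hs (g z)
    choose σ hσmem hσeq using h
    calc (Fintype.piFinset fun _ : Z => s).inf' _ (fun σ => ∑ z, g z (σ z))
        ≤ ∑ z, g z (σ z) := Finset.inf'_le _ (Fintype.mem_piFinset.mpr fun z => hσmem z)
      _ = ∑ z, s.inf' hs (g z) := by
          apply Finset.sum_congr rfl
          intro z _
          exact (hσeq z).symm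

private lemma dot_transpose {I : Type*} [Fintype I] (N : Matrix I I ℝ) (γ p : I → ℝ) :
    ∑ i, γ i * Nᵀ.mulVec p i = ∑ i, (N *ᵥ γ) i * p i := by
  simp only [Matrix.mulVec, dotProduct, Matrix.transpose_apply, Finset.mul_sum,
    Finset.sum_mul]
  rw [Finset.sum_comm]
  apply Finset.sum_congr rfl
  intro i _
  apply Finset.sum_congr rfl
  intro j _
  ring

/-- Every iterate of the POMDP Bellman backup of a pointwise minimum of finitely many
linear functions is again a pointwise minimum of finitely many linear functions. -/
theorem bellman_backup_iterates_piecewise_linear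
    {I A Z : Type*} [Fintype I] [Nonempty I] [Fintype A] [Nonempty A]
    [Fintype Z] [Nonempty Z]
    (β : ℝ) (hβ0 : 0 ≤ β) (hβ1 : β < 1)
    (c : A → I → ℝ) (M : A → Z → Matrix I I ℝ)
    (hM0 : ∀ a z i j, 0 ≤ M a z i j)
    (hM1 : ∀ a i, ∑ z, ∑ j, M a z i j = 1)
    (H : ((I → ℝ) → ℝ) → ((I → ℝ) → ℝ))
    (hH : ∀ w p, H w p = Finset.univ.inf' Finset.univ_nonempty
          (fun a : A => ∑ i, c a i * p i + β * ∑ z, w ((M a z)ᵀ.mulVec p))) :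
    ∀ (Γ : Finset (I → ℝ)) (hΓ : Γ.Nonempty) (n : ℕ),
      ∃ (Γₙ : Finset (I → ℝ)) (hΓₙ : Γₙ.Nonempty),
        H^[n] (fun p => Γ.inf' hΓ fun γ => ∑ i, γ i * p i) =
          fun p => Γₙ.inf' hΓₙ fun γ => ∑ i, γ i * p i := by
  intro Γ hΓ n
  classical
  induction n with
  | zero => exact ⟨Γ, hΓ, rfl⟩
  | succ n ih =>
    obtain ⟨Γₙ, hΓₙ, hEq⟩ := ih
    rw [Function.iterate_succ_apply', hEq]
    -- the new set of vectors
    set hpi : (Fintype.piFinset fun _ : Z => Γₙ).Nonempty :=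
      Fintype.piFinset_nonempty.2 fun _ => hΓₙ with hpidef
    have hSne : ((Finset.univ : Finset A) ×ˢ Fintype.piFinset (fun _ : Z => Γₙ)).Nonempty :=
      Finset.Nonempty.product Finset.univ_nonempty hpi
    refine ⟨((Finset.univ : Finset A) ×ˢ Fintype.piFinset (fun _ : Z => Γₙ)).image
        (fun q => fun i => c q.1 i + β * ∑ z, (M q.1 z *ᵥ q.2 z) i),
      hSne.image _, ?_⟩
    funext p
    rw [hH]
    rw [Finset.inf'_image]
    rw [Finset.inf'_product_left]
    apply Finset.inf'_congr _ rfl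
    intro a _
    -- rewrite the inner term
    have key : ∀ z : Z,
        (fun p => Γₙ.inf' hΓₙ fun γ => ∑ i, γ i * p i) ((M a z)ᵀ.mulVec p)
          = Γₙ.inf' hΓₙ (fun γ => ∑ i, (M a z *ᵥ γ) i * p i) := by
      intro z
      apply Finset.inf'_congr _ rfl
      intro γ _
      exact dot_transpose (M a z) γ p
    simp only [key]
    rw [show (∑ z, Γₙ.inf' hΓₙ fun γ => ∑ i, (M a z *ᵥ γ) i * p i)
        = (Fintype.piFinset fun _ : Z => Γₙ).inf' hpi
            (fun σ => ∑ z, ∑ i, (M a z *ᵥ σ z) i * p i) from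
      sum_inf' hΓₙ (fun z γ => ∑ i, (M a z *ᵥ γ) i * p i)]
    rw [mono_map_inf' hpi _ (fun x y hxy => mul_le_mul_of_nonneg_left hxy hβ0)]
    rw [mono_map_inf' (f := fun x => (∑ i, c a i * p i) + x) hpi _ (fun x y hxy => add_le_add_right hxy _)]
    apply Finset.inf'_congr _ rfl
    intro σ _
    simp only [Function.comp]
    simp only [add_mul, Finset.sum_add_distrib, Finset.sum_mul, Finset.mul_sum, mul_assoc]
    congr 1
    exact Finset.sum_comm
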